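/- Let λ be Lebesgue measure on [0,1] and let 𝒞 = ⋃_{n≥1} 𝒞_n. For every n ≥ 1, the set of samples (x₁,…,xₙ) ∈ [0,1]ⁿ for which sup_{C∈𝒞} |λ(C) − (1/n)·|{i : xᵢ ∈ C}|| ≥ 1/2 has λ^⊗n-outer measure 1. Consequently 𝒞 is not Glivenko–Cantelli with respect to λ. -/

import Mathlib

open MeasureTheory Filter

/-- The `n`-fold product (i.i.d.) measure on `Fin n → Ω`. -/
noncomputable def prodMeas {Ω : Type*} [MeasurableSpace Ω] (μ : Measure Ω) (n : ℕ) :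
    Measure (Fin n → Ω) := Measure.pi fun _ => μ

/-- Empirical frequency of a concept `C` on a sample `x` of size `n`. -/
noncomputable def empFreq {Ω : Type*} (C : Set Ω) {n : ℕ} (x : Fin n → Ω) : ℝ :=
  (Finset.univ.filter fun i => @decide (x i ∈ C) (Classical.propDecidable _) = true).card / n

/-- The concept class `𝒞` is Glivenko–Cantelli with respect to `μ`. -/
def IsGC {Ω : Type*} [MeasurableSpace Ω] (μ : Measure Ω) (𝒞 : Set (Set Ω)) : Prop :=
  ∀ ε : ℝ, 0 < ε →
    Tendsto (fun n => prodMeas μ n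
      {x | ε ≤ ⨆ C ∈ 𝒞, |(μ C).toReal - empFreq C x|}) atTop (nhds 0)

/-- `IntClass n`: unions of fewer than `√n` closed intervals `[i/n, (i+1)/n]`,
`0 ≤ i ≤ n - 1` (intervals of order `n`), including the empty union. -/
def IntClass (n : ℕ) : Set (Set ℝ) :=
  {C | ∃ s : Finset ℕ, s ⊆ Finset.range n ∧ (s.card : ℝ) < Real.sqrt n ∧
    C = ⋃ i ∈ s, Set.Icc ((i : ℝ) / n) (((i : ℝ) + 1) / n)}

/-- `IntClassAll = ⋃_{n ≥ 1} IntClass n`. -/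
def IntClassAll : Set (Set ℝ) := {C | ∃ n : ℕ, 1 ≤ n ∧ C ∈ IntClass n}

-- index of a point t ∈ [0,1] among intervals of order m
noncomputable def idx (m : ℕ) (t : ℝ) : ℕ := min ⌊t * m⌋₊ (m - 1)

lemma idx_mem {m : ℕ} (hm : 1 ≤ m) {t : ℝ} (ht : t ∈ Set.Icc (0:ℝ) 1) :
    t ∈ Set.Icc ((idx m t : ℝ) / m) (((idx m t : ℝ) + 1) / m) := by
  obtain ⟨ht0, ht1⟩ := ht
  have hm0 : (0:ℝ) < m := by exact_mod_cast hm
  constructor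
  · rw [div_le_iff₀ hm0]
    have h1 : (idx m t : ℝ) ≤ (⌊t * m⌋₊ : ℝ) := by
      exact_mod_cast min_le_left _ _
    have h2 : (⌊t * m⌋₊ : ℝ) ≤ t * m := Nat.floor_le (by positivity)
    linarith
  · rw [le_div_iff₀ hm0]
    rcases le_or_gt ⌊t * m⌋₊ (m - 1) with h | h
    · have : idx m t = ⌊t * m⌋₊ := min_eq_left h
      rw [this]
      have := Nat.lt_floor_add_one (t * m)
      linarith
    · have hk : idx m t = m - 1 := min_eq_right h.le
      rw [hk]
      have : ((m - 1 : ℕ) : ℝ) + 1 = (m : ℝ) := by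
        have := Nat.sub_add_cancel hm
        exact_mod_cast congrArg (Nat.cast (R := ℝ)) this
      rw [this]
      nlinarith

-- the key pointwise lemma
lemma key {n : ℕ} (hn : 1 ≤ n) (x : Fin n → ℝ) (hx : ∀ i, x i ∈ Set.Icc (0:ℝ) 1) :
    (1 : ℝ) / 2 ≤ ⨆ C ∈ IntClassAll,
      |((volume.restrict (Set.Icc (0 : ℝ) 1)) C).toReal - empFreq C x| := by
  set μ := volume.restrict (Set.Icc (0 : ℝ) 1) with hμ
  have hμuniv : μ Set.univ = 1 := by
    rw [hμ, Measure.restrict_apply MeasurableSet.univ, Set.univ_inter, Real.volume_Icc]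
    norm_num
  set m : ℕ := 2 * (n + 1) ^ 2 with hmdef
  have hm1 : 1 ≤ m := by have : 0 < m := by positivity
                         omega
  have hm0 : (0:ℝ) < m := by exact_mod_cast hm1
  set s : Finset ℕ := Finset.image (fun i => idx m (x i)) Finset.univ with hs
  set C : Set ℝ := ⋃ i ∈ s, Set.Icc ((i : ℝ) / m) (((i : ℝ) + 1) / m) with hC
  have hcard : s.card ≤ n := by
    calc s.card ≤ Finset.univ.card := Finset.card_image_le
    _ = n := by simp
  -- C ∈ IntClassAll
  have hCmem : C ∈ IntClassAll := by
    refine ⟨m, hm1, s, ?_, ?_, rfl⟩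
    · intro k hk
      simp only [hs, Finset.mem_image] at hk
      obtain ⟨i, -, rfl⟩ := hk
      have : idx m (x i) ≤ m - 1 := min_le_right _ _
      exact Finset.mem_range.mpr (lt_of_le_of_lt this (Nat.sub_lt hm1 one_pos))
    · have h1 : (s.card : ℝ) ≤ n := by exact_mod_cast hcard
      have h2 : (n : ℝ) < Real.sqrt m := by
        rw [show ((m : ℕ) : ℝ) = (2 * ((n:ℝ) + 1) ^ 2 : ℝ) by push_cast [hmdef]; ring]
        rw [Real.lt_sqrt (by positivity)]
        nlinarith
      linarith
  -- every sample point is in C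
  have hxC : ∀ i, x i ∈ C := by
    intro i
    apply Set.mem_biUnion (Finset.mem_image_of_mem _ (Finset.mem_univ i))
    exact idx_mem hm1 (hx i)
  -- empirical frequency is 1
  have hemp : empFreq C x = 1 := by
    unfold empFreq
    rw [Finset.filter_true_of_mem (fun i _ => @decide_eq_true _ (Classical.propDecidable _) (hxC i))]
    rw [Finset.card_univ, Fintype.card_fin]
    field_simp
  -- measure of C is small
  have hmeas : (μ C).toReal ≤ (n : ℝ) / m := by
    apply ENNReal.toReal_le_of_le_ofReal (by positivity)
    calc μ C ≤ ∑ i ∈ s, μ (Set.Icc ((i : ℝ) / m) (((i : ℝ) + 1) / m)) :=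
          measure_biUnion_finset_le _ _
    _ ≤ ∑ i ∈ s, ENNReal.ofReal (1 / m) := by
          apply Finset.sum_le_sum
          intro i _
          calc μ (Set.Icc ((i : ℝ) / m) (((i : ℝ) + 1) / m))
              ≤ volume (Set.Icc ((i : ℝ) / m) (((i : ℝ) + 1) / m)) :=
                Measure.restrict_le_self _
          _ = ENNReal.ofReal (1 / m) := by
                rw [Real.volume_Icc]
                congr 1
                field_simp
                ring
    _ = (s.card : ENNReal) * ENNReal.ofReal (1 / m) := by
          rw [Finset.sum_const, nsmul_eq_mul]
    _ ≤ (n : ENNReal) * ENNReal.ofReal (1 / m) := by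
          exact mul_le_mul_left (by exact_mod_cast hcard) _
    _ = ENNReal.ofReal ((n : ℝ) / m) := by
          rw [← ENNReal.ofReal_natCast, ← ENNReal.ofReal_mul (by positivity)]
          congr 1
          ring
  have hnm : (n : ℝ) / m ≤ 1 / 2 := by
    rw [div_le_div_iff₀ hm0 (by norm_num)]
    push_cast [hmdef]
    have h1 : (1:ℝ) ≤ n := by exact_mod_cast hn
    nlinarith
  -- bound on everything
  have hbd : ∀ D : Set ℝ, |(μ D).toReal - empFreq D x| ≤ 2 := by
    intro D
    have h1 : (μ D).toReal ≤ 1 := by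
      have : μ D ≤ 1 := hμuniv ▸ measure_mono (Set.subset_univ D)
      calc (μ D).toReal ≤ (1 : ENNReal).toReal := ENNReal.toReal_mono ENNReal.one_ne_top this
      _ = 1 := by simp
    have h2 : 0 ≤ (μ D).toReal := ENNReal.toReal_nonneg
    have h3 : 0 ≤ empFreq D x := by
      unfold empFreq
      exact div_nonneg (Nat.cast_nonneg _) (Nat.cast_nonneg _)
    have h4 : empFreq D x ≤ 1 := by
      unfold empFreq
      rw [div_le_one (by exact_mod_cast hn)]
      exact_mod_cast (Finset.card_filter_le _ _).trans_eq (by simp)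
    rw [abs_le]; constructor <;> linarith
  have hbdd : BddAbove (Set.range fun D : Set ℝ =>
      ⨆ _ : D ∈ IntClassAll, |(μ D).toReal - empFreq D x|) := by
    refine ⟨2, ?_⟩
    rintro y ⟨D, rfl⟩
    exact Real.iSup_le (fun _ => hbd D) (by norm_num)
  calc (1:ℝ)/2 ≤ |(μ C).toReal - empFreq C x| := by
        rw [hemp, abs_sub_comm, abs_of_nonneg (by linarith)]
        linarith
  _ = (⨆ _ : C ∈ IntClassAll, |(μ C).toReal - empFreq C x|) := (ciSup_pos (p := C ∈ IntClassAll) (f := fun _ => |(μ C).toReal - empFreq C x|) hCmem).symm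
  _ ≤ _ := le_ciSup hbdd C

/-- under Lebesgue measure `λ` on `[0,1]`, for every sample size
`n ≥ 1` the set of samples on which the empirical frequencies of `𝒞 = ⋃_{n ≥ 1} 𝒞ₙ`
deviate from true measures by at least `1/2` has full outer measure; consequently `𝒞`
is not Glivenko–Cantelli with respect to `λ`. -/
theorem stmt18 :
    (∀ n : ℕ, 1 ≤ n →
      prodMeas (volume.restrict (Set.Icc (0 : ℝ) 1)) n
        {x : Fin n → ℝ | (1 : ℝ) / 2 ≤ ⨆ C ∈ IntClassAll,
          |((volume.restrict (Set.Icc (0 : ℝ) 1)) C).toReal - empFreq C x|} = 1) ∧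
    ¬ IsGC (volume.restrict (Set.Icc (0 : ℝ) 1)) IntClassAll := by
  have hμuniv : (volume.restrict (Set.Icc (0 : ℝ) 1)) Set.univ = 1 := by
    rw [Measure.restrict_apply MeasurableSet.univ, Set.univ_inter, Real.volume_Icc]
    norm_num
  haveI : IsProbabilityMeasure (volume.restrict (Set.Icc (0 : ℝ) 1)) := ⟨hμuniv⟩
  have hmain : ∀ n : ℕ, 1 ≤ n →
      prodMeas (volume.restrict (Set.Icc (0 : ℝ) 1)) n
        {x : Fin n → ℝ | (1 : ℝ) / 2 ≤ ⨆ C ∈ IntClassAll,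
          |((volume.restrict (Set.Icc (0 : ℝ) 1)) C).toReal - empFreq C x|} = 1 := by
    intro n hn
    haveI : IsProbabilityMeasure (prodMeas (volume.restrict (Set.Icc (0 : ℝ) 1)) n) :=
      inferInstanceAs (IsProbabilityMeasure
        (Measure.pi fun _ : Fin n => volume.restrict (Set.Icc (0 : ℝ) 1)))
    have hT : prodMeas (volume.restrict (Set.Icc (0 : ℝ) 1)) n
        (Set.univ.pi fun _ : Fin n => Set.Icc (0:ℝ) 1) = 1 := by
      rw [prodMeas, Measure.pi_pi]
      simp [Measure.restrict_apply measurableSet_Icc, Real.volume_Icc]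
    refine le_antisymm prob_le_one ?_
    calc (1:ENNReal) = _ := hT.symm
    _ ≤ _ := measure_mono (fun x hx => key hn x (fun i => hx i (Set.mem_univ i)))
  refine ⟨hmain, fun h => ?_⟩
  have h2 := h ((1:ℝ)/2) (by norm_num)
  have h3 : Tendsto (fun _ : ℕ => (1:ENNReal)) atTop (nhds 0) := by
    refine h2.congr' ?_
    filter_upwards [eventually_ge_atTop 1] with n hn
    exact hmain n hn
  exact zero_ne_one (tendsto_nhds_unique h3 tendsto_const_nhds)
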